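/- Let f ∈ ℝ[X_1,…,X_n] be symmetric and let g ∈ ℝ[Z_1,…,Z_n] be the unique polynomial with f = g(p_1,…,p_n). Let V be the n×n Vandermonde matrix with entries V_{i,j} = X_i^{j-1}, regarded as an invertible matrix over the field of rational functions ℝ(X_1,…,X_n), and let ∇f = (∂f/∂X_1, …, ∂f/∂X_n)^t. Then for every j ∈ {1,…,n}: ∂g/∂Z_j = 0 (as a polynomial in ℝ[Z_1,…,Z_n]) if and only if the j-th entry of the vector V^{-1}·∇f (computed over ℝ(X_1,…,X_n)) is zero. In particular, if J ⊆ {1,…,n} and (V^{-1}·∇f)_j = 0 for all j ∉ J, then f can be written as a polynomial in the power sums {p_j : j ∈ J} alone. -/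

import Mathlib

open MvPolynomial Matrix


private lemma pderiv_aeval_eq {n : ℕ} (P : Fin n → MvPolynomial (Fin n) ℝ)
    (g : MvPolynomial (Fin n) ℝ) (i : Fin n) :
    pderiv i (aeval P g) = ∑ j : Fin n, aeval P (pderiv j g) * pderiv i (P j) := by
  classical
  induction g using MvPolynomial.induction_on with
  | C a => simp
  | add p q hp hq =>
    rw [map_add, map_add, hp, hq, ← Finset.sum_add_distrib]
    exact Finset.sum_congr rfl fun j _ => by simp [add_mul]
  | mul_X p q hq =>
    have h1 : pderiv i (aeval P (p * X q))
        = (∑ j : Fin n, aeval P (pderiv j p) * pderiv i (P j)) * P q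
          + aeval P p * pderiv i (P q) := by
      rw [_root_.map_mul, aeval_X, pderiv_mul, hq]
    have h2 : ∀ j : Fin n, aeval P (pderiv j (p * X q))
        = aeval P (pderiv j p) * P q + aeval P p * (if q = j then 1 else 0) := by
      intro j
      rw [pderiv_mul, map_add, _root_.map_mul, _root_.map_mul, aeval_X, pderiv_X]
      simp [Pi.single_apply]
    rw [h1]
    simp only [h2, add_mul, Finset.sum_add_distrib, Finset.sum_mul]
    congr 1
    · exact Finset.sum_congr rfl fun j _ => by ring
    · rw [Finset.sum_eq_single q]
      · simp
      · intro j _ hj; simp [Ne.symm hj]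
      · simp


private lemma coeff_pderiv'' {n : ℕ} (i : Fin n) (m : Fin n →₀ ℕ)
    (h : MvPolynomial (Fin n) ℝ) :
    coeff m (pderiv i h) = ((m i : ℝ) + 1) * coeff (m + Finsupp.single i 1) h := by
  classical
  induction h using MvPolynomial.induction_on' with
  | add p q hp hq => simp [hp, hq, mul_add]
  | monomial s a =>
    rw [pderiv_monomial, coeff_monomial, coeff_monomial]
    by_cases hs : s i = 0
    · have h1 : s - Finsupp.single i 1 = s := by
        ext k
        rcases eq_or_ne k i with rfl | hk
        · simp [hs]
        · simp [Finsupp.single_eq_of_ne' (Ne.symm hk)]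
      have h2 : s ≠ m + Finsupp.single i 1 := by
        intro he
        apply absurd hs
        rw [he]; simp
      rw [h1, if_neg h2]
      by_cases hsm : s = m
      · subst hsm; simp [hs]
      · rw [if_neg hsm]; ring
    · have hiff : s - Finsupp.single i 1 = m ↔ s = m + Finsupp.single i 1 := by
        constructor
        · intro he
          ext k
          rcases eq_or_ne k i with rfl | hk
          · have := congrArg (fun f => f k) he
            simp only [Finsupp.tsub_apply, Finsupp.single_eq_same] at this
            simp [← this, Nat.sub_add_cancel (Nat.one_le_iff_ne_zero.mpr hs)]
          · have := congrArg (fun f => f k) he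
            simp only [Finsupp.tsub_apply, Finsupp.single_eq_of_ne' (Ne.symm hk)] at this
            simp [Finsupp.single_eq_of_ne' (Ne.symm hk), ← this]
        · intro he
          subst he
          ext k
          rcases eq_or_ne k i with rfl | hk
          · simp
          · simp [Finsupp.single_eq_of_ne' (Ne.symm hk)]
      by_cases hc : s = m + Finsupp.single i 1
      · rw [if_pos (hiff.mpr hc), if_pos hc]
        have hsi : s i = m i + 1 := by rw [hc]; simp
        rw [hsi]; push_cast; ring
      · rw [if_neg (fun he => hc (hiff.mp he)), if_neg hc]; ring


section
variable {n : ℕ}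

private lemma coeff_eq_zero_of_pderiv_eq_zero {j : Fin n} {g : MvPolynomial (Fin n) ℝ}
    (hg : pderiv j g = 0) {m : Fin n →₀ ℕ} (hm : m j ≠ 0) : coeff m g = 0 := by
  have hm' : (m - Finsupp.single j 1) + Finsupp.single j 1 = m := by
    ext k
    rcases eq_or_ne k j with rfl | hk
    · simp [Nat.sub_add_cancel (Nat.one_le_iff_ne_zero.mpr hm)]
    · simp [Finsupp.single_eq_of_ne' (Ne.symm hk)]
  have hthis := coeff_pderiv'' j (m - Finsupp.single j 1) g
  rw [hg, coeff_zero, hm'] at hthis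
  have hne : (((m - Finsupp.single j 1 : Fin n →₀ ℕ) j : ℝ) + 1) ≠ 0 := by positivity
  exact (mul_eq_zero.mp hthis.symm).resolve_left hne

private lemma eq_C_of_pderiv_eq_zero {h : MvPolynomial (Fin n) ℝ}
    (hp : ∀ j : Fin n, pderiv j h = 0) : h = C (coeff 0 h) := by
  apply MvPolynomial.ext
  intro m
  rcases eq_or_ne m 0 with rfl | hm
  · simp
  · obtain ⟨j, hj⟩ : ∃ j, m j ≠ 0 := by
      by_contra hc
      push_neg at hc
      exact hm (Finsupp.ext hc)
    rw [coeff_eq_zero_of_pderiv_eq_zero (hp j) hj, coeff_C, if_neg (Ne.symm hm)]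

private lemma sum_support_pderiv {j : Fin n} {h : MvPolynomial (Fin n) ℝ} {m : Fin n →₀ ℕ}
    (hm : m ∈ (pderiv j h).support) : (m.sum fun _ k => k) + 1 ≤ h.totalDegree := by
  rw [MvPolynomial.mem_support_iff, coeff_pderiv''] at hm
  have h2 : coeff (m + Finsupp.single j 1) h ≠ 0 := right_ne_zero_of_mul hm
  have h3 := le_totalDegree (Finsupp.mem_support_iff.mpr h2)
  have h4 : ((m + Finsupp.single j 1).sum fun _ k => k) = (m.sum fun _ k => k) + 1 := by
    rw [Finsupp.sum_add_index' (fun _ => rfl) (fun _ _ _ => rfl)]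
    simp [Finsupp.sum_single_index]
  rwa [h4] at h3

private lemma totalDegree_pderiv_le {d : ℕ} {h : MvPolynomial (Fin n) ℝ}
    (hd : h.totalDegree ≤ d + 1) (j : Fin n) : (pderiv j h).totalDegree ≤ d := by
  apply Finset.sup_le
  intro m hm
  have := sum_support_pderiv hm
  omega

private lemma pderiv_eq_zero_of_totalDegree_eq_zero {h : MvPolynomial (Fin n) ℝ}
    (hd : h.totalDegree = 0) (j : Fin n) : pderiv j h = 0 := by
  rw [← MvPolynomial.support_eq_empty, Finset.eq_empty_iff_forall_notMem]
  intro m hm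
  have := sum_support_pderiv hm
  omega


end


private lemma vandermonde_det_isUnit {n : ℕ}
    {V : Matrix (Fin n) (Fin n) (FractionRing (MvPolynomial (Fin n) ℝ))}
    (hV : ∀ i j : Fin n,
      V i j = algebraMap (MvPolynomial (Fin n) ℝ) _ (X i ^ (j : ℕ))) :
    IsUnit V.det := by
  have hVe : V = Matrix.vandermonde
      (fun i => algebraMap (MvPolynomial (Fin n) ℝ) _ (X i)) := by
    ext i j; rw [hV, map_pow]; rfl
  rw [hVe, isUnit_iff_ne_zero, Ne, Matrix.det_vandermonde_eq_zero_iff]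
  rintro ⟨i, j, he, hne⟩
  exact hne (MvPolynomial.X_injective
    (IsFractionRing.injective (MvPolynomial (Fin n) ℝ) _ he))

private lemma inv_mulVec_eq {n : ℕ} {K : Type*} [Field K] {M : Matrix (Fin n) (Fin n) K}
    (hM : IsUnit M.det) {u w : Fin n → K} (h : M *ᵥ w = u) : M⁻¹ *ᵥ u = w := by
  rw [← h, Matrix.mulVec_mulVec, Matrix.nonsing_inv_mul _ hM, Matrix.one_mulVec]

private lemma pderiv_powerSum {n : ℕ} (i : Fin n) (m : ℕ) :
    pderiv i (∑ k : Fin n, (X k : MvPolynomial (Fin n) ℝ) ^ (m + 1))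
      = ((m : MvPolynomial (Fin n) ℝ) + 1) * X i ^ m := by
  classical
  rw [map_sum, Finset.sum_eq_single i]
  · rw [pderiv_pow, pderiv_X_self, mul_one, Nat.add_sub_cancel]; push_cast; ring
  · intro k _ hk; rw [pderiv_pow, pderiv_X_of_ne hk, mul_zero]
  · simp

private lemma grad_key {n : ℕ} (h : MvPolynomial (Fin n) ℝ) (i : Fin n) :
    pderiv i (aeval (fun l : Fin n => ∑ j : Fin n, X j ^ ((l : ℕ) + 1)) h)
      = ∑ j : Fin n, X i ^ (j : ℕ) * ((((j : ℕ) : MvPolynomial (Fin n) ℝ) + 1) *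
          aeval (fun l : Fin n => ∑ j : Fin n, X j ^ ((l : ℕ) + 1)) (pderiv j h)) := by
  rw [pderiv_aeval_eq]
  exact Finset.sum_congr rfl fun j _ => by rw [pderiv_powerSum]; ring

private lemma vandermonde_mulVec {n : ℕ}
    {V : Matrix (Fin n) (Fin n) (FractionRing (MvPolynomial (Fin n) ℝ))}
    (hV : ∀ i j : Fin n,
      V i j = algebraMap (MvPolynomial (Fin n) ℝ) _ (X i ^ (j : ℕ)))
    (h : MvPolynomial (Fin n) ℝ) :
    V *ᵥ (fun j : Fin n => algebraMap (MvPolynomial (Fin n) ℝ) _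
        ((((j : ℕ) : MvPolynomial (Fin n) ℝ) + 1) *
          aeval (fun l : Fin n => ∑ k : Fin n,
            (X k : MvPolynomial (Fin n) ℝ) ^ ((l : ℕ) + 1)) (pderiv j h)))
      = fun i : Fin n => algebraMap (MvPolynomial (Fin n) ℝ) _
          (pderiv i (aeval (fun l : Fin n => ∑ k : Fin n,
            (X k : MvPolynomial (Fin n) ℝ) ^ ((l : ℕ) + 1)) h)) := by
  funext i
  simp only [Matrix.mulVec, dotProduct, hV, grad_key, map_sum, _root_.map_mul]

private lemma natcast_succ_ne {n : ℕ} (j : Fin n) :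
    (((j : ℕ) : MvPolynomial (Fin n) ℝ) + 1) ≠ 0 := by
  have : ((((j : ℕ) + 1 : ℕ)) : MvPolynomial (Fin n) ℝ) ≠ 0 := by
    exact_mod_cast Nat.succ_ne_zero (j : ℕ)
  push_cast at this
  exact this

private lemma aeval_psum_eq_zero {n : ℕ} (d : ℕ) :
    ∀ h : MvPolynomial (Fin n) ℝ, h.totalDegree ≤ d →
    aeval (fun l : Fin n => ∑ j : Fin n, (X j : MvPolynomial (Fin n) ℝ) ^ ((l : ℕ) + 1)) h = 0 →
    h = 0 := by
  induction d with
  | zero =>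
    intro h hd h0
    have hc : h = C (coeff 0 h) := eq_C_of_pderiv_eq_zero
      (fun j => pderiv_eq_zero_of_totalDegree_eq_zero (Nat.le_zero.mp hd) j)
    rw [hc, aeval_C] at h0
    have hcc : coeff 0 h = 0 := by
      have := congrArg constantCoeff h0
      simpa using this
    rw [hc, hcc, map_zero]
  | succ d ih =>
    intro h hd h0
    set V : Matrix (Fin n) (Fin n) (FractionRing (MvPolynomial (Fin n) ℝ)) :=
      Matrix.of fun i j =>
        algebraMap (MvPolynomial (Fin n) ℝ) _ (X i ^ (j : ℕ)) with hVdef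
    have hV : ∀ i j : Fin n,
        V i j = algebraMap (MvPolynomial (Fin n) ℝ) _ (X i ^ (j : ℕ)) := fun i j => rfl
    have hmv := vandermonde_mulVec hV h
    rw [h0] at hmv
    simp only [map_zero] at hmv
    rw [show (fun _ : Fin n => (0 : FractionRing (MvPolynomial (Fin n) ℝ))) = 0
      from rfl] at hmv
    have hw0 := inv_mulVec_eq (vandermonde_det_isUnit hV) hmv
    rw [Matrix.mulVec_zero] at hw0
    have hpj : ∀ j : Fin n, pderiv j h = 0 := by
      intro j
      have h3 := congrFun hw0.symm j
      simp only [Pi.zero_apply] at h3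
      rw [← map_zero (algebraMap (MvPolynomial (Fin n) ℝ)
        (FractionRing (MvPolynomial (Fin n) ℝ)))] at h3
      have h4 := IsFractionRing.injective (MvPolynomial (Fin n) ℝ)
        (FractionRing (MvPolynomial (Fin n) ℝ)) h3
      have h5 := (mul_eq_zero.mp h4).resolve_left (natcast_succ_ne j)
      exact ih (pderiv j h) (totalDegree_pderiv_le hd j) h5
    have hc : h = C (coeff 0 h) := eq_C_of_pderiv_eq_zero hpj
    rw [hc, aeval_C] at h0
    have hcc : coeff 0 h = 0 := by
      have := congrArg constantCoeff h0
      simpa using this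
    rw [hc, hcc, map_zero]

private lemma aeval_psum_injective {n : ℕ} {h : MvPolynomial (Fin n) ℝ}
    (h0 : aeval (fun l : Fin n => ∑ j : Fin n,
      (X j : MvPolynomial (Fin n) ℝ) ^ ((l : ℕ) + 1)) h = 0) : h = 0 :=
  aeval_psum_eq_zero h.totalDegree h le_rfl h0


/-- Criterion for `J`-sparsity: with `f = g(p_1,…,p_n)`, `V` the Vandermonde matrix
`V_{i,j} = X_i^{j-1}` over the field of rational functions `ℝ(X_1,…,X_n)`, and
`∇f` the gradient of `f`, one has `∂g/∂Z_j = 0` iff `(V⁻¹·∇f)_j = 0`.  In particular,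
if `(V⁻¹·∇f)_j = 0` for all `j ∉ J`, then `f` is a polynomial in the power sums
`p_j`, `j ∈ J`, alone. -/
theorem sparse_criterion_vandermonde (n : ℕ)
    (f g : MvPolynomial (Fin n) ℝ) (hf : f.IsSymmetric)
    (hfg : f = aeval (fun l : Fin n => ∑ j : Fin n, X j ^ ((l : ℕ) + 1)) g)
    (V : Matrix (Fin n) (Fin n) (FractionRing (MvPolynomial (Fin n) ℝ)))
    (hV : ∀ i j : Fin n,
      V i j = algebraMap (MvPolynomial (Fin n) ℝ) _ (X i ^ (j : ℕ)))
    (gradf : Fin n → FractionRing (MvPolynomial (Fin n) ℝ))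
    (hgrad : ∀ i : Fin n,
      gradf i = algebraMap (MvPolynomial (Fin n) ℝ) _ (pderiv i f)) :
    (∀ j : Fin n, pderiv j g = 0 ↔ (V⁻¹ *ᵥ gradf) j = 0) ∧
    (∀ J : Set (Fin n), (∀ j ∉ J, (V⁻¹ *ᵥ gradf) j = 0) →
      ∃ g' : MvPolynomial J ℝ,
        f = aeval (fun j : J => ∑ i : Fin n, X i ^ (((j : Fin n) : ℕ) + 1)) g') := by
  have hdet := vandermonde_det_isUnit hV
  have hgw : V *ᵥ (fun j : Fin n => algebraMap (MvPolynomial (Fin n) ℝ) _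
        ((((j : ℕ) : MvPolynomial (Fin n) ℝ) + 1) *
          aeval (fun l : Fin n => ∑ k : Fin n,
            (X k : MvPolynomial (Fin n) ℝ) ^ ((l : ℕ) + 1)) (pderiv j g))) = gradf := by
    rw [vandermonde_mulVec hV g]
    funext i
    rw [hgrad i, hfg]
  have hinv : V⁻¹ *ᵥ gradf = fun j : Fin n => algebraMap (MvPolynomial (Fin n) ℝ) _
        ((((j : ℕ) : MvPolynomial (Fin n) ℝ) + 1) *
          aeval (fun l : Fin n => ∑ k : Fin n,
            (X k : MvPolynomial (Fin n) ℝ) ^ ((l : ℕ) + 1)) (pderiv j g)) :=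
    inv_mulVec_eq hdet hgw
  have part1 : ∀ j : Fin n, pderiv j g = 0 ↔ (V⁻¹ *ᵥ gradf) j = 0 := by
    intro j
    rw [hinv]
    constructor
    · intro h
      simp only [h, map_zero, mul_zero]
    · intro h
      simp only [] at h
      rw [← map_zero (algebraMap (MvPolynomial (Fin n) ℝ)
        (FractionRing (MvPolynomial (Fin n) ℝ)))] at h
      have h4 := IsFractionRing.injective (MvPolynomial (Fin n) ℝ)
        (FractionRing (MvPolynomial (Fin n) ℝ)) h
      have h5 := (mul_eq_zero.mp h4).resolve_left (natcast_succ_ne j)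
      exact aeval_psum_injective h5
  refine ⟨part1, ?_⟩
  intro J hJ
  have hzero : ∀ j ∉ J, pderiv j g = 0 := fun j hj => (part1 j).mpr (hJ j hj)
  have hvars : (g.vars : Set (Fin n)) ⊆ J := by
    intro j hjv
    by_contra hjJ
    rw [Finset.mem_coe, MvPolynomial.mem_vars] at hjv
    obtain ⟨m, hm, hjm⟩ := hjv
    exact (MvPolynomial.mem_support_iff.mp hm)
      (coeff_eq_zero_of_pderiv_eq_zero (hzero j hjJ) (Finsupp.mem_support_iff.mp hjm))
  have hsup : g ∈ MvPolynomial.supported ℝ J := (MvPolynomial.mem_supported).mpr hvars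
  rw [MvPolynomial.supported_eq_range_rename] at hsup
  obtain ⟨g', hg'⟩ := hsup
  refine ⟨g', ?_⟩
  have hg'' : rename (Subtype.val : J → Fin n) g' = g := hg'
  rw [hfg, ← hg'', aeval_rename]
  rfl
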